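/- Fix m ≥ 2. Then the distributional variance estimator is weakly consistent in the number of outer samples: for every ε > 0, μ_{n,m}({X : |V̂ar_k^{(n,m)}(X) − Var_k(ν)| ≥ ε}) → 0 as n → ∞. -/

import Mathlib

open MeasureTheory ProbabilityTheory

noncomputable section

/-- The σ-algebra on the space of probability measures induced from the σ-algebra on
`Measure Y` generated by the evaluation maps. -/
instance {Y : Type*} [MeasurableSpace Y] : MeasurableSpace (ProbabilityMeasure Y) :=
  MeasurableSpace.comap (fun P => (P : Measure Y)) inferInstance

/-- The kernel bilinear form `⟨P|k|Q⟩ = ∫∫ k(x,y) dP(x) dQ(y)`. -/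
def kerInner {Y : Type*} [MeasurableSpace Y] (k : Y → Y → ℝ) (P Q : Measure Y) : ℝ :=
  ∫ x, ∫ y, k x y ∂Q ∂P

/-- `join(ν)`: the probability measure `A ↦ ∫ P(A) dν(P)`. -/
def pmJoin {Y : Type*} [MeasurableSpace Y] (ν : Measure (ProbabilityMeasure Y)) : Measure Y :=
  ν.bind (fun P => (P : Measure Y))

/-- The two-stage sampling law `μ_{n,m}` on `Fin n → Fin m → Y`: sample
`P₁, …, Pₙ` i.i.d. from `ν`, then conditionally on `Pᵢ` sample `X_{i1}, …, X_{im}`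
i.i.d. from `Pᵢ`, independently across `i`. -/
def twoStage {Y : Type*} [MeasurableSpace Y] (ν : Measure (ProbabilityMeasure Y))
    (n m : ℕ) : Measure (Fin n → Fin m → Y) :=
  (Measure.pi fun _ : Fin n => ν).bind
    (fun Ps => Measure.pi fun i : Fin n => Measure.pi fun _ : Fin m => (Ps i : Measure Y))

/-- The distributional variance estimator. -/
def varEst {Y : Type*} (k : Y → Y → ℝ) (n m : ℕ) (X : Fin n → Fin m → Y) : ℝ :=
  (1 / ((n : ℝ) * (m : ℝ) * ((m : ℝ) - 1))) *
      ∑ i, ∑ j, ∑ t ∈ Finset.univ.erase j, k (X i j) (X i t)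
  - (1 / ((n : ℝ) * ((n : ℝ) - 1) * (m : ℝ) ^ 2)) *
      ∑ i, ∑ s ∈ Finset.univ.erase i, ∑ j, ∑ t, k (X i j) (X s t)

open Filter Set

namespace VarEstAux


variable {α β : Type*} [MeasurableSpace α] [MeasurableSpace β]

lemma integrable_of_bdd {μ : Measure α} [IsFiniteMeasure μ] {f : α → ℝ} {C : ℝ}
    (hf : Measurable f) (hC : ∀ x, |f x| ≤ C) : Integrable f μ :=
  (integrable_const C).mono' hf.aestronglyMeasurable
    (Eventually.of_forall fun x => by simpa [Real.norm_eq_abs] using hC x)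

lemma measurable_cons {r : ℕ} :
    Measurable (fun p : α × (Fin r → α) => (Fin.cons p.1 p.2 : Fin (r+1) → α)) := by
  apply measurable_pi_lambda
  intro i
  refine Fin.cases ?_ ?_ i
  · simpa using measurable_fst
  · intro j; simpa [Function.comp_def] using (measurable_pi_apply j).comp measurable_snd

lemma map_cons_pi {r : ℕ} (μ : Measure α) [IsProbabilityMeasure μ] :
    Measure.map (fun p : α × (Fin r → α) => (Fin.cons p.1 p.2 : Fin (r+1) → α))
      (μ.prod (Measure.pi fun _ : Fin r => μ)) = Measure.pi fun _ : Fin (r+1) => μ := by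
  refine (Measure.pi_eq fun s hs => ?_).symm
  rw [Measure.map_apply measurable_cons (MeasurableSet.univ_pi hs)]
  have hpre : (fun p : α × (Fin r → α) => (Fin.cons p.1 p.2 : Fin (r+1) → α)) ⁻¹' (univ.pi s)
      = (s 0) ×ˢ (univ.pi fun j : Fin r => s j.succ) := by
    ext p
    simp only [mem_preimage, Set.mem_pi, mem_univ, true_implies, mem_prod]
    constructor
    · intro h; exact ⟨by simpa using h 0, fun j => by simpa using h j.succ⟩
    · rintro ⟨h0, h1⟩ i
      refine Fin.cases ?_ ?_ i
      · simpa using h0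
      · intro j; simpa using h1 j
  rw [hpre, Measure.prod_prod, Measure.pi_pi, Fin.prod_univ_succ]

lemma integral_pi_peel {r : ℕ} (μ : Measure α) [IsProbabilityMeasure μ]
    {f : (Fin (r+1) → α) → ℝ} (hf : Measurable f) {C : ℝ} (hC : ∀ x, |f x| ≤ C) :
    ∫ w, f w ∂(Measure.pi fun _ : Fin (r+1) => μ)
      = ∫ x, ∫ w, f (Fin.cons x w) ∂(Measure.pi fun _ : Fin r => μ) ∂μ := by
  rw [← map_cons_pi μ, integral_map measurable_cons.aemeasurable hf.aestronglyMeasurable]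
  exact integral_prod _ (integrable_of_bdd (hf.comp measurable_cons) (fun p => hC _))

lemma map_comp_pi {n r : ℕ} (μ : Measure α) [IsProbabilityMeasure μ]
    {e : Fin r → Fin n} (he : Function.Injective e) :
    Measure.map (fun X : Fin n → α => fun j => X (e j)) (Measure.pi fun _ : Fin n => μ)
      = Measure.pi fun _ : Fin r => μ := by
  refine (Measure.pi_eq fun s hs => ?_).symm
  have hmeas : Measurable (fun X : Fin n → α => fun j => X (e j)) :=
    measurable_pi_lambda _ fun j => measurable_pi_apply (e j)
  rw [Measure.map_apply hmeas (MeasurableSet.univ_pi hs)]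
  have hpre : (fun X : Fin n → α => fun j => X (e j)) ⁻¹' (univ.pi s)
      = univ.pi (fun i => ⋂ j, ⋂ (_ : e j = i), s j) := by
    ext X
    simp only [mem_preimage, Set.mem_pi, mem_univ, true_implies, Set.mem_iInter]
    constructor
    · intro h i j hj; subst hj; exact h j
    · intro h j; exact h (e j) j rfl
  rw [hpre, Measure.pi_pi]
  have hT1 : ∀ j : Fin r, (⋂ j', ⋂ (_ : e j' = e j), s j') = s j := by
    intro j
    apply Subset.antisymm
    · exact iInter_subset_of_subset j (by simp)
    · intro x hx
      simp only [mem_iInter]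
      intro j' hj'
      cases he hj'
      exact hx
  have hT2 : ∀ i, i ∉ Finset.univ.image e → ((⋂ j, ⋂ (_ : e j = i), s j) : Set α) = univ := by
    intro i hi
    apply eq_univ_of_forall; intro x
    simp only [mem_iInter]
    intro j hj
    exact absurd (hj ▸ Finset.mem_image_of_mem e (Finset.mem_univ j)) hi
  calc ∏ i, μ (⋂ j, ⋂ (_ : e j = i), s j)
      = ∏ i ∈ Finset.univ.image e, μ (⋂ j, ⋂ (_ : e j = i), s j) :=
        (Finset.prod_subset (Finset.subset_univ _) (fun i _ hi => by
          rw [hT2 i hi, measure_univ])).symm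
    _ = ∏ j, μ (⋂ j', ⋂ (_ : e j' = e j), s j') :=
        Finset.prod_image (fun a _ b _ h => he h)
    _ = ∏ j, μ (s j) := by simp_rw [hT1]

lemma lintegral_pi_prod {n : ℕ} (μ : Measure α) [IsProbabilityMeasure μ]
    (g : Fin n → α → ENNReal) (hg : ∀ i, Measurable (g i)) :
    ∫⁻ X, ∏ i, g i (X i) ∂(Measure.pi fun _ : Fin n => μ) = ∏ i, ∫⁻ x, g i x ∂μ := by
  induction n with
  | zero => simp
  | succ r ih =>
    have hprod : Measurable fun X : Fin (r+1) → α => ∏ i, g i (X i) :=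
      Finset.measurable_prod _ fun i _ => (hg i).comp (measurable_pi_apply i)
    rw [← map_cons_pi μ, lintegral_map hprod measurable_cons]
    have h1 : ∀ p : α × (Fin r → α), ∏ i, g i ((Fin.cons p.1 p.2 : Fin (r+1) → α) i)
        = g 0 p.1 * ∏ j : Fin r, g j.succ (p.2 j) := by
      intro p
      rw [Fin.prod_univ_succ]
      simp
    simp_rw [h1]
    rw [lintegral_prod_mul (f := g 0) (g := fun w : Fin r → α => ∏ j : Fin r, g j.succ (w j))
      (hg 0).aemeasurable
      (Finset.measurable_prod _ fun j _ => ((hg j.succ).comp (measurable_pi_apply j))).aemeasurable]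
    rw [ih (fun j => g j.succ) (fun j => hg j.succ), Fin.prod_univ_succ]

lemma measurable_pi_of_measurable {n : ℕ} {g : Fin n → β → Measure α}
    (hg : ∀ i, Measurable (g i)) (hp : ∀ i b, IsProbabilityMeasure (g i b)) :
    Measurable fun b => Measure.pi (fun i => g i b) := by
  refine Measure.measurable_measure.2 fun s hs => ?_
  have key : ∀ ⦃t : Set (Fin n → α)⦄, MeasurableSet t →
      Measurable (fun b => Measure.pi (fun i => g i b) t) := by
    refine MeasurableSpace.induction_on_inter generateFrom_pi.symm isPiSystem_pi ?_ ?_ ?_ ?_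
    · simp
    · rintro t ⟨t', ht', rfl⟩
      have h1 : (fun b => Measure.pi (fun i => g i b) (univ.pi t'))
          = fun b => ∏ i, g i b (t' i) := by
        funext b
        haveI := fun i => hp i b
        exact Measure.pi_pi _ _
      rw [h1]
      exact Finset.measurable_prod _ fun i _ =>
        (Measure.measurable_coe (ht' i (mem_univ i))).comp (hg i)
    · intro t ht hmt
      have h1 : (fun b => Measure.pi (fun i => g i b) tᶜ)
          = fun b => 1 - Measure.pi (fun i => g i b) t := by
        funext b
        haveI := fun i => hp i b
        rw [measure_compl ht (measure_ne_top _ _), measure_univ]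
      rw [h1]
      exact measurable_const.sub hmt
    · intro f hdisj hmeas hC
      have h1 : (fun b => Measure.pi (fun i => g i b) (⋃ i, f i))
          = fun b => ∑' i, Measure.pi (fun i' => g i' b) (f i) := by
        funext b
        exact measure_iUnion hdisj hmeas
      rw [h1]
      exact Measurable.ennreal_tsum hC
  exact key hs

lemma integral_bind' {ν : Measure β} [IsProbabilityMeasure ν] {κ : β → Measure α}
    (hκ : Measurable κ) (hκp : ∀ b, IsProbabilityMeasure (κ b))
    {f : α → ℝ} (hf : Measurable f) {C : ℝ} (hC : ∀ x, |f x| ≤ C) :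
    ∫ x, f x ∂(ν.bind κ) = ∫ b, ∫ x, f x ∂(κ b) ∂ν := by
  rcases isEmpty_or_nonempty α with hα | hα
  · have hβ : Nonempty β := by
      by_contra h
      have h1 : ν univ = 1 := measure_univ
      rw [Set.univ_eq_empty_iff.2 (not_nonempty_iff.1 h), measure_empty] at h1
      exact zero_ne_one h1
    obtain ⟨b₀⟩ := hβ
    have h1 : κ b₀ univ = 1 := measure_univ
    rw [Set.univ_eq_empty_iff.2 hα, measure_empty] at h1
    exact absurd h1 zero_ne_one
  have hC0 : 0 ≤ C := le_trans (abs_nonneg _) (hC (Classical.arbitrary α))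
  set F : α → ENNReal := fun x => ENNReal.ofReal (f x + C) with hFdef
  have hFmeas : Measurable F := (hf.add_const C).ennreal_ofReal
  have hFle : ∀ x, F x ≤ ENNReal.ofReal (2*C) := fun x =>
    ENNReal.ofReal_le_ofReal (by have := (abs_le.1 (hC x)).2; linarith)
  have key : ∀ (μ : Measure α), IsProbabilityMeasure μ →
      ∫ x, f x ∂μ = (∫⁻ x, F x ∂μ).toReal - C := by
    intro μ hμ
    have hnn : 0 ≤ᵐ[μ] fun x => f x + C :=
      Eventually.of_forall fun x => by have := (abs_le.1 (hC x)).1; simp only [Pi.zero_apply]; linarith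
    have h1 : ∫ x, (f x + C) ∂μ = (∫⁻ x, F x ∂μ).toReal :=
      integral_eq_lintegral_of_nonneg_ae hnn ((hf.add_const C).aestronglyMeasurable)
    have h2 : ∫ x, (f x + C) ∂μ = (∫ x, f x ∂μ) + C := by
      rw [integral_add (integrable_of_bdd hf hC) (integrable_const C), integral_const,
        probReal_univ]
      simp
    linarith
  haveI hbind : IsProbabilityMeasure (ν.bind κ) := by
    constructor
    rw [Measure.bind_apply MeasurableSet.univ hκ.aemeasurable]
    simp [fun b => (hκp b).measure_univ]
  rw [key (ν.bind κ) hbind, Measure.lintegral_bind hκ.aemeasurable hFmeas.aemeasurable]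
  have hLmeas : Measurable fun b => ∫⁻ x, F x ∂(κ b) :=
    (Measure.measurable_lintegral hFmeas).comp hκ
  have hLlt : ∀ b, (∫⁻ x, F x ∂(κ b)) ≤ ENNReal.ofReal (2*C) := fun b => by
    calc ∫⁻ x, F x ∂(κ b) ≤ ∫⁻ _, ENNReal.ofReal (2*C) ∂(κ b) := lintegral_mono hFle
    _ = ENNReal.ofReal (2*C) := by
        rw [lintegral_const, (hκp b).measure_univ, mul_one]
  have h3 : ∫ b, (∫⁻ x, F x ∂(κ b)).toReal ∂ν = (∫⁻ b, ∫⁻ x, F x ∂(κ b) ∂ν).toReal :=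
    integral_toReal hLmeas.aemeasurable
      (Eventually.of_forall fun b => lt_of_le_of_lt (hLlt b) ENNReal.ofReal_lt_top)
  rw [← h3]
  have h4 : ∀ b, ∫ x, f x ∂(κ b) = (∫⁻ x, F x ∂(κ b)).toReal - C :=
    fun b => key (κ b) (hκp b)
  simp_rw [h4]
  rw [integral_sub (integrable_of_bdd hLmeas.ennreal_toReal (fun b => by
      rw [abs_of_nonneg ENNReal.toReal_nonneg]
      exact ENNReal.toReal_le_of_le_ofReal (by linarith) (hLlt b)))
    (integrable_const C), integral_const, probReal_univ]
  simp
lemma meas_pair {γ : Type*} [MeasurableSpace γ] {φ : α → α → γ}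
    (hφ : Measurable fun p : α × α => φ p.1 p.2) {f g : β → α}
    (hf : Measurable f) (hg : Measurable g) : Measurable fun b => φ (f b) (g b) := by
  have := hφ.comp (hf.prodMk hg)
  simpa [Function.comp_def] using this

lemma nonempty_of_prob (μ : Measure α) [IsProbabilityMeasure μ] : Nonempty α := by
  by_contra h
  have h1 : μ univ = 1 := measure_univ
  rw [Set.univ_eq_empty_iff.2 (not_nonempty_iff.1 h), measure_empty] at h1
  exact zero_ne_one h1

lemma integral_pi_one (μ : Measure α) [IsProbabilityMeasure μ]
    {φ : α → ℝ} (hφ : Measurable φ) {C : ℝ} (hC : ∀ x, |φ x| ≤ C) :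
    ∫ w : Fin 1 → α, φ (w 0) ∂(Measure.pi fun _ : Fin 1 => μ) = ∫ x, φ x ∂μ := by
  have hm : Measurable fun w : Fin 1 → α => φ (w 0) := hφ.comp (measurable_pi_apply 0)
  rw [integral_pi_peel μ hm (C := C) (fun w => hC _)]
  have h2 : ∀ y, ∫ w : Fin 0 → α, φ ((Fin.cons y w : Fin 1 → α) 0)
      ∂(Measure.pi fun _ : Fin 0 => μ) = φ y := by
    intro y
    simp [Fin.cons_zero]
  simp_rw [h2]

lemma integral_pi_two (μ : Measure α) [IsProbabilityMeasure μ]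
    {φ : α → α → ℝ} (hφ : Measurable fun p : α × α => φ p.1 p.2)
    {C : ℝ} (hC : ∀ x y, |φ x y| ≤ C) :
    ∫ w : Fin 2 → α, φ (w 0) (w 1) ∂(Measure.pi fun _ : Fin 2 => μ)
      = ∫ x, ∫ y, φ x y ∂μ ∂μ := by
  have hm : Measurable fun w : Fin 2 → α => φ (w 0) (w 1) :=
    meas_pair hφ (measurable_pi_apply 0) (measurable_pi_apply 1)
  rw [integral_pi_peel μ hm (C := C) (fun w => hC _ _)]
  have key : ∀ x, ∫ w : Fin 1 → α, φ ((Fin.cons x w : Fin 2 → α) 0) ((Fin.cons x w : Fin 2 → α) 1)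
      ∂(Measure.pi fun _ : Fin 1 => μ) = ∫ y, φ x y ∂μ := by
    intro x
    have h0 : ∀ w : Fin 1 → α,
        φ ((Fin.cons x w : Fin 2 → α) 0) ((Fin.cons x w : Fin 2 → α) 1) = φ x (w 0) := by
      intro w
      have h1 : ((Fin.cons x w : Fin 2 → α) 1) = w 0 := by
        have : (1 : Fin 2) = Fin.succ 0 := rfl
        rw [this, Fin.cons_succ]
      rw [Fin.cons_zero, h1]
    simp_rw [h0]
    exact integral_pi_one μ (meas_pair hφ measurable_const measurable_id) (fun y => hC x y)
  simp_rw [key]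

lemma integral_pi_pair {n : ℕ} (μ : Measure α) [IsProbabilityMeasure μ]
    {i j : Fin n} (hij : i ≠ j)
    {φ : α → α → ℝ} (hφ : Measurable fun p : α × α => φ p.1 p.2)
    {C : ℝ} (hC : ∀ x y, |φ x y| ≤ C) :
    ∫ X : Fin n → α, φ (X i) (X j) ∂(Measure.pi fun _ : Fin n => μ)
      = ∫ x, ∫ y, φ x y ∂μ ∂μ := by
  have he : Function.Injective (![i, j] : Fin 2 → Fin n) := by
    intro a b h
    fin_cases a <;> fin_cases b <;> simp_all
  have hmap := map_comp_pi μ he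
  have hm2 : Measurable fun w : Fin 2 → α => φ (w 0) (w 1) :=
    meas_pair hφ (measurable_pi_apply 0) (measurable_pi_apply 1)
  have hme : Measurable (fun X : Fin n → α => fun t => X ((![i,j] : Fin 2 → Fin n) t)) :=
    measurable_pi_lambda _ fun t => measurable_pi_apply _
  calc ∫ X : Fin n → α, φ (X i) (X j) ∂(Measure.pi fun _ : Fin n => μ)
      = ∫ X : Fin n → α, (fun w : Fin 2 → α => φ (w 0) (w 1)) (fun t => X (![i,j] t))
          ∂(Measure.pi fun _ : Fin n => μ) := by simp
    _ = ∫ w : Fin 2 → α, φ (w 0) (w 1) ∂(Measure.pi fun _ : Fin 2 => μ) := by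
        rw [← hmap, integral_map hme.aemeasurable hm2.aestronglyMeasurable]
    _ = _ := integral_pi_two μ hφ hC

lemma integral_pi_single {n : ℕ} (μ : Measure α) [IsProbabilityMeasure μ]
    (i : Fin n) {φ : α → ℝ} (hφ : Measurable φ) {C : ℝ} (hC : ∀ x, |φ x| ≤ C) :
    ∫ X : Fin n → α, φ (X i) ∂(Measure.pi fun _ : Fin n => μ) = ∫ x, φ x ∂μ := by
  have he : Function.Injective (![i] : Fin 1 → Fin n) := by
    intro a b h
    fin_cases a <;> fin_cases b <;> simp_all
  have hmap := map_comp_pi μ he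
  have hm1 : Measurable fun w : Fin 1 → α => φ (w 0) := hφ.comp (measurable_pi_apply 0)
  have hme : Measurable (fun X : Fin n → α => fun t => X ((![i] : Fin 1 → Fin n) t)) :=
    measurable_pi_lambda _ fun t => measurable_pi_apply _
  calc ∫ X : Fin n → α, φ (X i) ∂(Measure.pi fun _ : Fin n => μ)
      = ∫ X : Fin n → α, (fun w : Fin 1 → α => φ (w 0)) (fun t => X (![i] t))
          ∂(Measure.pi fun _ : Fin n => μ) := by simp
    _ = ∫ w : Fin 1 → α, φ (w 0) ∂(Measure.pi fun _ : Fin 1 => μ) := by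
        rw [← hmap, integral_map hme.aemeasurable hm1.aestronglyMeasurable]
    _ = _ := integral_pi_one μ hφ hC


lemma integral_eq_toReal_sub (μ : Measure α) [IsProbabilityMeasure μ] {f : α → ℝ}
    (hf : Measurable f) {C : ℝ} (hC : ∀ x, |f x| ≤ C) :
    ∫ x, f x ∂μ = (∫⁻ x, ENNReal.ofReal (f x + C) ∂μ).toReal - C := by
  have hnn : 0 ≤ᵐ[μ] fun x => f x + C :=
    Eventually.of_forall fun x => by
      have := (abs_le.1 (hC x)).1; simp only [Pi.zero_apply]; linarith
  have h1 : ∫ x, (f x + C) ∂μ = (∫⁻ x, ENNReal.ofReal (f x + C) ∂μ).toReal :=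
    integral_eq_lintegral_of_nonneg_ae hnn ((hf.add_const C).aestronglyMeasurable)
  have h2 : ∫ x, (f x + C) ∂μ = (∫ x, f x ∂μ) + C := by
    rw [integral_add (integrable_of_bdd hf hC) (integrable_const C), integral_const,
      probReal_univ]
    simp
  linarith

lemma measurable_integral_kernel {κ : β → Measure α} (hκ : Measurable κ)
    (hκp : ∀ b, IsProbabilityMeasure (κ b)) {f : α → ℝ} (hf : Measurable f)
    {C : ℝ} (hC : ∀ x, |f x| ≤ C) :
    Measurable fun b => ∫ x, f x ∂(κ b) := by
  have h1 : (fun b => ∫ x, f x ∂(κ b))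
      = fun b => (∫⁻ x, ENNReal.ofReal (f x + C) ∂(κ b)).toReal - C := by
    funext b
    haveI := hκp b
    exact integral_eq_toReal_sub (κ b) hf hC
  rw [h1]
  exact (((Measure.measurable_lintegral ((hf.add_const C).ennreal_ofReal)).comp
    hκ).ennreal_toReal).sub measurable_const

lemma abs_integral_le (μ : Measure α) [IsProbabilityMeasure μ] {f : α → ℝ}
    {C : ℝ} (hC : ∀ x, |f x| ≤ C) : |∫ x, f x ∂μ| ≤ C := by
  have := norm_integral_le_of_norm_le_const (μ := μ) (f := f) (C := C)
    (Eventually.of_forall fun x => by rw [Real.norm_eq_abs]; exact hC x)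
  simpa [Real.norm_eq_abs, measure_univ] using this
lemma integral_pi_four (μ : Measure α) [IsProbabilityMeasure μ]
    {φ ψ : α → α → ℝ} (hφ : Measurable fun p : α × α => φ p.1 p.2)
    (hψ : Measurable fun p : α × α => ψ p.1 p.2)
    {Cφ Cψ : ℝ} (hCφ : ∀ x y, |φ x y| ≤ Cφ) (hCψ : ∀ x y, |ψ x y| ≤ Cψ) :
    ∫ w : Fin 4 → α, φ (w 0) (w 1) * ψ (w 2) (w 3) ∂(Measure.pi fun _ : Fin 4 => μ)
      = (∫ x, ∫ y, φ x y ∂μ ∂μ) * (∫ x, ∫ y, ψ x y ∂μ ∂μ) := by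
  have hne : Nonempty α := nonempty_of_prob μ
  have hCφ0 : 0 ≤ Cφ := le_trans (abs_nonneg _) (hCφ (Classical.arbitrary α) (Classical.arbitrary α))
  have hCψ0 : 0 ≤ Cψ := le_trans (abs_nonneg _) (hCψ (Classical.arbitrary α) (Classical.arbitrary α))
  have hbd : ∀ x y x' y', |φ x y * ψ x' y'| ≤ Cφ * Cψ := fun x y x' y' => by
    rw [abs_mul]; exact mul_le_mul (hCφ _ _) (hCψ _ _) (abs_nonneg _) hCφ0
  have hm4 : Measurable fun w : Fin 4 → α => φ (w 0) (w 1) * ψ (w 2) (w 3) :=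
    (meas_pair hφ (measurable_pi_apply 0) (measurable_pi_apply 1)).mul
      (meas_pair hψ (measurable_pi_apply 2) (measurable_pi_apply 3))
  rw [integral_pi_peel μ hm4 (C := Cφ * Cψ) (fun w => hbd _ _ _ _)]
  have key : ∀ a : α, ∫ w : Fin 3 → α,
      φ ((Fin.cons a w : Fin 4 → α) 0) ((Fin.cons a w : Fin 4 → α) 1)
        * ψ ((Fin.cons a w : Fin 4 → α) 2) ((Fin.cons a w : Fin 4 → α) 3)
      ∂(Measure.pi fun _ : Fin 3 => μ)
      = (∫ y, φ a y ∂μ) * (∫ x, ∫ y, ψ x y ∂μ ∂μ) := by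
    intro a
    have h0 : ∀ w : Fin 3 → α,
        φ ((Fin.cons a w : Fin 4 → α) 0) ((Fin.cons a w : Fin 4 → α) 1)
          * ψ ((Fin.cons a w : Fin 4 → α) 2) ((Fin.cons a w : Fin 4 → α) 3)
        = φ a (w 0) * ψ (w 1) (w 2) := by
      intro w
      have e1 : ((Fin.cons a w : Fin 4 → α) 1) = w 0 := by
        rw [show (1 : Fin 4) = Fin.succ 0 from rfl, Fin.cons_succ]
      have e2 : ((Fin.cons a w : Fin 4 → α) 2) = w 1 := by
        rw [show (2 : Fin 4) = Fin.succ 1 from rfl, Fin.cons_succ]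
      have e3 : ((Fin.cons a w : Fin 4 → α) 3) = w 2 := by
        rw [show (3 : Fin 4) = Fin.succ 2 from rfl, Fin.cons_succ]
      rw [Fin.cons_zero, e1, e2, e3]
    simp_rw [h0]
    have hm3 : Measurable fun w : Fin 3 → α => φ a (w 0) * ψ (w 1) (w 2) :=
      (meas_pair hφ measurable_const (measurable_pi_apply 0)).mul
        (meas_pair hψ (measurable_pi_apply 1) (measurable_pi_apply 2))
    rw [integral_pi_peel μ hm3 (C := Cφ * Cψ) (fun w => hbd _ _ _ _)]
    have key2 : ∀ b : α, ∫ w : Fin 2 → α,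
        φ a ((Fin.cons b w : Fin 3 → α) 0) * ψ ((Fin.cons b w : Fin 3 → α) 1)
          ((Fin.cons b w : Fin 3 → α) 2) ∂(Measure.pi fun _ : Fin 2 => μ)
        = φ a b * (∫ x, ∫ y, ψ x y ∂μ ∂μ) := by
      intro b
      have h0' : ∀ w : Fin 2 → α,
          φ a ((Fin.cons b w : Fin 3 → α) 0) * ψ ((Fin.cons b w : Fin 3 → α) 1)
            ((Fin.cons b w : Fin 3 → α) 2) = φ a b * ψ (w 0) (w 1) := by
        intro w
        have e1 : ((Fin.cons b w : Fin 3 → α) 1) = w 0 := by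
          rw [show (1 : Fin 3) = Fin.succ 0 from rfl, Fin.cons_succ]
        have e2 : ((Fin.cons b w : Fin 3 → α) 2) = w 1 := by
          rw [show (2 : Fin 3) = Fin.succ 1 from rfl, Fin.cons_succ]
        rw [Fin.cons_zero, e1, e2]
      simp_rw [h0']
      rw [integral_const_mul, integral_pi_two μ hψ hCψ]
    simp_rw [key2]
    rw [integral_mul_const]
  simp_rw [key]
  rw [integral_mul_const]

lemma cov_zero {n : ℕ} (μ : Measure α) [IsProbabilityMeasure μ]
    {G : α → α → ℝ} (hG : Measurable fun p : α × α => G p.1 p.2)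
    {C : ℝ} (hC : ∀ x y, |G x y| ≤ C) (hmean : ∫ x, ∫ y, G x y ∂μ ∂μ = 0)
    {i j s t : Fin n} (hij : i ≠ j) (hst : s ≠ t) (his : i ≠ s) (hit : i ≠ t)
    (hjs : j ≠ s) (hjt : j ≠ t) :
    ∫ X : Fin n → α, G (X i) (X j) * G (X s) (X t)
      ∂(Measure.pi fun _ : Fin n => μ) = 0 := by
  have he : Function.Injective (![i, j, s, t] : Fin 4 → Fin n) := by
    intro a b h
    fin_cases a <;> fin_cases b <;> simp_all
  have hm4 : Measurable fun w : Fin 4 → α => G (w 0) (w 1) * G (w 2) (w 3) :=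
    (meas_pair hG (measurable_pi_apply 0) (measurable_pi_apply 1)).mul
      (meas_pair hG (measurable_pi_apply 2) (measurable_pi_apply 3))
  have hme : Measurable (fun X : Fin n → α => fun u => X ((![i,j,s,t] : Fin 4 → Fin n) u)) :=
    measurable_pi_lambda _ fun u => measurable_pi_apply _
  calc ∫ X : Fin n → α, G (X i) (X j) * G (X s) (X t) ∂(Measure.pi fun _ : Fin n => μ)
      = ∫ X : Fin n → α, (fun w : Fin 4 → α => G (w 0) (w 1) * G (w 2) (w 3))
          (fun u => X ((![i,j,s,t] : Fin 4 → Fin n) u)) ∂(Measure.pi fun _ : Fin n => μ) := by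
        simp
    _ = ∫ w : Fin 4 → α, G (w 0) (w 1) * G (w 2) (w 3) ∂(Measure.pi fun _ : Fin 4 => μ) := by
        rw [← map_comp_pi μ he, integral_map hme.aemeasurable hm4.aestronglyMeasurable]
    _ = (∫ x, ∫ y, G x y ∂μ ∂μ) * (∫ x, ∫ y, G x y ∂μ ∂μ) := integral_pi_four μ hG hG hC hC
    _ = 0 := by rw [hmean, mul_zero]

lemma card_filter_fst_eq {n : ℕ} (a : Fin n) :
    ((Finset.univ : Finset (Fin n × Fin n)).filter fun q => q.1 = a).card ≤ n := by
  have h := Finset.card_le_card_of_injOn (f := Prod.snd)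
    (s := (Finset.univ : Finset (Fin n × Fin n)).filter fun q => q.1 = a)
    (t := (Finset.univ : Finset (Fin n)))
    (fun q _ => Finset.mem_univ _)
    (fun q hq q' hq' hsnd => by
      simp only [Finset.mem_coe, Finset.mem_filter] at hq hq'
      exact Prod.ext (hq.2.trans hq'.2.symm) hsnd)
  simpa using h

lemma card_filter_snd_eq {n : ℕ} (a : Fin n) :
    ((Finset.univ : Finset (Fin n × Fin n)).filter fun q => q.2 = a).card ≤ n := by
  have h := Finset.card_le_card_of_injOn (f := Prod.fst)
    (s := (Finset.univ : Finset (Fin n × Fin n)).filter fun q => q.2 = a)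
    (t := (Finset.univ : Finset (Fin n)))
    (fun q _ => Finset.mem_univ _)
    (fun q hq q' hq' hfst => by
      simp only [Finset.mem_coe, Finset.mem_filter] at hq hq'
      exact Prod.ext hfst (hq.2.trans hq'.2.symm))
  simpa using h

lemma ustat_sq_bound (μ : Measure α) [IsProbabilityMeasure μ]
    {G : α → α → ℝ} (hG : Measurable fun p : α × α => G p.1 p.2)
    {C : ℝ} (hC : ∀ x y, |G x y| ≤ C) (hmean : ∫ x, ∫ y, G x y ∂μ ∂μ = 0)
    (n : ℕ) :
    ∫ X : Fin n → α, (∑ i, ∑ s ∈ Finset.univ.erase i, G (X i) (X s))^2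
        ∂(Measure.pi fun _ : Fin n => μ) ≤ 4 * C^2 * n^3 := by
  have hne : Nonempty α := nonempty_of_prob μ
  have hC0 : 0 ≤ C := le_trans (abs_nonneg _) (hC (Classical.arbitrary α) (Classical.arbitrary α))
  set S : Finset (Fin n × Fin n) := Finset.univ.filter (fun p => p.1 ≠ p.2) with hS
  have hsum : ∀ X : Fin n → α, ∑ i, ∑ s ∈ Finset.univ.erase i, G (X i) (X s)
      = ∑ p ∈ S, G (X p.1) (X p.2) := by
    intro X
    rw [hS, Finset.sum_filter, Fintype.sum_prod_type]
    refine Finset.sum_congr rfl fun i _ => ?_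
    rw [← Finset.filter_ne, Finset.sum_filter]
  simp_rw [hsum]
  -- expand the square
  have hsq : ∀ X : Fin n → α, (∑ p ∈ S, G (X p.1) (X p.2))^2
      = ∑ p ∈ S, ∑ q ∈ S, G (X p.1) (X p.2) * G (X q.1) (X q.2) := by
    intro X
    rw [pow_two, Finset.sum_mul_sum]
  simp_rw [hsq]
  have hint : ∀ p q : Fin n × Fin n, Integrable
      (fun X : Fin n → α => G (X p.1) (X p.2) * G (X q.1) (X q.2))
      (Measure.pi fun _ : Fin n => μ) := by
    intro p q
    refine integrable_of_bdd (C := C^2) ((meas_pair hG (measurable_pi_apply p.1)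
      (measurable_pi_apply p.2)).mul (meas_pair hG (measurable_pi_apply q.1)
        (measurable_pi_apply q.2))) (fun X => ?_)
    rw [abs_mul, pow_two]
    exact mul_le_mul (hC _ _) (hC _ _) (abs_nonneg _) hC0
  rw [integral_finset_sum _ (fun p _ => integrable_finset_sum _ (fun q _ => hint p q))]
  have hswap : ∀ p ∈ S, ∫ X : Fin n → α, ∑ q ∈ S, G (X p.1) (X p.2) * G (X q.1) (X q.2)
      ∂(Measure.pi fun _ : Fin n => μ)
      = ∑ q ∈ S, ∫ X : Fin n → α, G (X p.1) (X p.2) * G (X q.1) (X q.2)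
          ∂(Measure.pi fun _ : Fin n => μ) :=
    fun p _ => integral_finset_sum _ (fun q _ => hint p q)
  rw [Finset.sum_congr rfl hswap]
  -- bound each term
  have hterm_abs : ∀ p q : Fin n × Fin n,
      |∫ X : Fin n → α, G (X p.1) (X p.2) * G (X q.1) (X q.2)
        ∂(Measure.pi fun _ : Fin n => μ)| ≤ C^2 := by
    intro p q
    have := norm_integral_le_of_norm_le_const (μ := Measure.pi fun _ : Fin n => μ)
      (f := fun X : Fin n → α => G (X p.1) (X p.2) * G (X q.1) (X q.2)) (C := C^2)
      (Eventually.of_forall fun X => by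
        rw [Real.norm_eq_abs, abs_mul, pow_two]
        exact mul_le_mul (hC _ _) (hC _ _) (abs_nonneg _) hC0)
    simpa [Real.norm_eq_abs, measure_univ] using this
  have hinner : ∀ p ∈ S, ∑ q ∈ S, ∫ X : Fin n → α, G (X p.1) (X p.2) * G (X q.1) (X q.2)
      ∂(Measure.pi fun _ : Fin n => μ) ≤ (4 * n) * C^2 := by
    intro p hp
    have hpS : p.1 ≠ p.2 := by
      rw [hS] at hp; exact (Finset.mem_filter.1 hp).2
    set touch : Fin n × Fin n → Prop :=
      fun q => q.1 = p.1 ∨ q.1 = p.2 ∨ q.2 = p.1 ∨ q.2 = p.2 with htouch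
    rw [← Finset.sum_filter_add_sum_filter_not S touch]
    have hzero : ∑ q ∈ S.filter (fun q => ¬ touch q),
        ∫ X : Fin n → α, G (X p.1) (X p.2) * G (X q.1) (X q.2)
          ∂(Measure.pi fun _ : Fin n => μ) = 0 := by
      refine Finset.sum_eq_zero fun q hq => ?_
      simp only [hS, htouch, Finset.mem_filter, Finset.mem_univ, true_and] at hq
      obtain ⟨hq12, hq4⟩ := hq
      push_neg at hq4
      obtain ⟨h1, h2, h3, h4⟩ := hq4
      exact cov_zero μ hG hC hmean hpS hq12 (fun h => h1 h.symm) (fun h => h3 h.symm)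
        (fun h => h2 h.symm) (fun h => h4 h.symm)
    rw [hzero, add_zero]
    have hcard : (S.filter touch).card ≤ 4 * n := by
      have hsub : S.filter touch ⊆
          (((Finset.univ.filter fun q : Fin n × Fin n => q.1 = p.1) ∪
            (Finset.univ.filter fun q : Fin n × Fin n => q.1 = p.2)) ∪
          ((Finset.univ.filter fun q : Fin n × Fin n => q.2 = p.1) ∪
            (Finset.univ.filter fun q : Fin n × Fin n => q.2 = p.2))) := by
        intro q hq
        simp only [hS, htouch, Finset.mem_filter, Finset.mem_univ, true_and,
          Finset.mem_union] at hq ⊢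
        tauto
      calc (S.filter touch).card ≤ _ := Finset.card_le_card hsub
        _ ≤ _ := Finset.card_union_le _ _
        _ ≤ (((Finset.univ.filter fun q : Fin n × Fin n => q.1 = p.1).card +
              (Finset.univ.filter fun q : Fin n × Fin n => q.1 = p.2).card) +
            ((Finset.univ.filter fun q : Fin n × Fin n => q.2 = p.1).card +
              (Finset.univ.filter fun q : Fin n × Fin n => q.2 = p.2).card)) := by
          gcongr <;> exact Finset.card_union_le _ _
        _ ≤ (n + n) + (n + n) := by
          gcongr
          · exact card_filter_fst_eq p.1
          · exact card_filter_fst_eq p.2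
          · exact card_filter_snd_eq p.1
          · exact card_filter_snd_eq p.2
        _ = 4 * n := by ring
    calc ∑ q ∈ S.filter touch, ∫ X : Fin n → α, G (X p.1) (X p.2) * G (X q.1) (X q.2)
          ∂(Measure.pi fun _ : Fin n => μ)
        ≤ (S.filter touch).card • (C^2) := by
          refine Finset.sum_le_card_nsmul _ _ _ fun q _ => ?_
          exact le_trans (le_abs_self _) (hterm_abs p q)
      _ = ((S.filter touch).card : ℝ) * C^2 := by rw [nsmul_eq_mul]
      _ ≤ (4 * n : ℕ) * C^2 := by
          have : ((S.filter touch).card : ℝ) ≤ ((4 * n : ℕ) : ℝ) := by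
            exact_mod_cast hcard
          exact mul_le_mul_of_nonneg_right this (by positivity)
      _ = (4 * n) * C^2 := by push_cast; ring
  calc ∑ p ∈ S, ∑ q ∈ S, ∫ X : Fin n → α, G (X p.1) (X p.2) * G (X q.1) (X q.2)
        ∂(Measure.pi fun _ : Fin n => μ)
      ≤ S.card • ((4 * n) * C^2) := Finset.sum_le_card_nsmul _ _ _ hinner
    _ = (S.card : ℝ) * ((4 * n) * C^2) := by rw [nsmul_eq_mul]
    _ ≤ (n^2 : ℝ) * ((4 * n) * C^2) := by
        have h1 : (S.card : ℝ) ≤ (n^2 : ℝ) := by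
          have : S.card ≤ n^2 := by
            calc S.card ≤ (Finset.univ : Finset (Fin n × Fin n)).card :=
              Finset.card_le_card (Finset.filter_subset _ _)
            _ = n^2 := by simp [pow_two]
          exact_mod_cast this
        have h2 : (0:ℝ) ≤ (4 * n) * C^2 := by positivity
        exact mul_le_mul_of_nonneg_right h1 h2
    _ = 4 * C^2 * n^3 := by ring

end VarEstAux

namespace VarEstMain
open VarEstAux
variable {Y : Type*} [MeasurableSpace Y]

variable {Y : Type*} [MeasurableSpace Y]

lemma measurable_coe_pm : Measurable (fun P : ProbabilityMeasure Y => (P : Measure Y)) :=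
  measurable_iff_comap_le.2 le_rfl

/-- the mixture measure `μ₁` on blocks -/
def mixM (ν : Measure (ProbabilityMeasure Y)) (m : ℕ) : Measure (Fin m → Y) :=
  ν.bind (fun P => Measure.pi fun _ : Fin m => (P : Measure Y))

lemma measurable_pim (m : ℕ) :
    Measurable fun P : ProbabilityMeasure Y => Measure.pi fun _ : Fin m => (P : Measure Y) :=
  VarEstAux.measurable_pi_of_measurable
    (g := fun (_ : Fin m) (P : ProbabilityMeasure Y) => (P : Measure Y))
    (fun _ => measurable_coe_pm) (fun _ P => inferInstance)

instance instProbMixM (ν : Measure (ProbabilityMeasure Y)) [IsProbabilityMeasure ν] (m : ℕ) :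
    IsProbabilityMeasure (mixM ν m) := by
  constructor
  rw [mixM, Measure.bind_apply MeasurableSet.univ (measurable_pim m).aemeasurable]
  simp

instance instProbJoin (ν : Measure (ProbabilityMeasure Y)) [IsProbabilityMeasure ν] :
    IsProbabilityMeasure (pmJoin ν) := by
  constructor
  rw [pmJoin, Measure.bind_apply MeasurableSet.univ measurable_coe_pm.aemeasurable]
  simp

lemma twoStage_eq_pi (ν : Measure (ProbabilityMeasure Y)) [IsProbabilityMeasure ν] (n m : ℕ) :
    twoStage ν n m = Measure.pi fun _ : Fin n => mixM ν m := by
  refine (Measure.pi_eq fun s hs => ?_).symm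
  have hκ2 : Measurable fun Ps : Fin n → ProbabilityMeasure Y =>
      Measure.pi fun i : Fin n => Measure.pi fun _ : Fin m => (Ps i : Measure Y) :=
    VarEstAux.measurable_pi_of_measurable
      (g := fun (i : Fin n) (Ps : Fin n → ProbabilityMeasure Y) =>
        Measure.pi fun _ : Fin m => (Ps i : Measure Y))
      (fun i => by
        have := (measurable_pim (Y := Y) m).comp
          (measurable_pi_apply (X := fun _ : Fin n => ProbabilityMeasure Y) i)
        simpa [Function.comp_def] using this)
      (fun i Ps => inferInstance)
  rw [twoStage, Measure.bind_apply (MeasurableSet.univ_pi hs) hκ2.aemeasurable]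
  have h1 : ∀ Ps : Fin n → ProbabilityMeasure Y,
      (Measure.pi fun i : Fin n => Measure.pi fun _ : Fin m => (Ps i : Measure Y)) (univ.pi s)
      = ∏ i, (Measure.pi fun _ : Fin m => (Ps i : Measure Y)) (s i) :=
    fun Ps => Measure.pi_pi _ _
  simp_rw [h1]
  rw [VarEstAux.lintegral_pi_prod ν
    (fun i P => (Measure.pi fun _ : Fin m => (P : Measure Y)) (s i))
    (fun i => (Measure.measurable_coe (hs i)).comp (measurable_pim m))]
  refine Finset.prod_congr rfl fun i _ => ?_
  rw [mixM, Measure.bind_apply (hs i) (measurable_pim m).aemeasurable]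


section Kernels
variable (k : Y → Y → ℝ) (m : ℕ)

/-- within-block average -/
def fB (B : Fin m → Y) : ℝ :=
  (1 / ((m:ℝ) * ((m:ℝ) - 1))) * ∑ j, ∑ t ∈ Finset.univ.erase j, k (B j) (B t)

/-- cross-block average -/
def gB (B C : Fin m → Y) : ℝ := (1 / (m:ℝ)^2) * ∑ j, ∑ t, k (B j) (C t)

end Kernels

variable {k : Y → Y → ℝ} {K₀ : ℝ} {m : ℕ}

lemma meas_fB (hk : Measurable fun p : Y × Y => k p.1 p.2) : Measurable (fB k m) :=
  (Finset.measurable_sum _ fun j _ => Finset.measurable_sum _ fun t _ =>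
    meas_pair hk (measurable_pi_apply j) (measurable_pi_apply t)).const_mul _

lemma meas_gB (hk : Measurable fun p : Y × Y => k p.1 p.2) :
    Measurable fun p : (Fin m → Y) × (Fin m → Y) => gB k m p.1 p.2 :=
  (Finset.measurable_sum _ fun j _ => Finset.measurable_sum _ fun t _ =>
    meas_pair hk ((measurable_pi_apply j).comp measurable_fst)
      ((measurable_pi_apply t).comp measurable_snd)).const_mul _

lemma card_cast (hm : 2 ≤ m) : ((m - 1 : ℕ) : ℝ) = (m : ℝ) - 1 := by
  have : 1 ≤ m := by omega
  push_cast [this]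
  ring

lemma abs_fB (hm : 2 ≤ m) (hK : ∀ x y, |k x y| ≤ K₀) (B : Fin m → Y) : |fB k m B| ≤ K₀ := by
  have hK0 : 0 ≤ K₀ := le_trans (abs_nonneg _) (hK (B ⟨0, by omega⟩) (B ⟨0, by omega⟩))
  have hm1 : (1:ℝ) ≤ (m:ℝ) - 1 := by
    have : (2:ℝ) ≤ (m:ℝ) := by exact_mod_cast hm
    linarith
  have hmpos : (0:ℝ) < (m:ℝ) := by positivity
  have h1 : ∀ j : Fin m, |∑ t ∈ Finset.univ.erase j, k (B j) (B t)| ≤ ((m:ℝ) - 1) * K₀ := by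
    intro j
    refine le_trans (Finset.abs_sum_le_sum_abs _ _) ?_
    calc ∑ t ∈ Finset.univ.erase j, |k (B j) (B t)|
        ≤ (Finset.univ.erase j).card • K₀ :=
          Finset.sum_le_card_nsmul _ _ _ (fun t _ => hK _ _)
      _ = ((m:ℝ) - 1) * K₀ := by
          rw [Finset.card_erase_of_mem (Finset.mem_univ j), Finset.card_univ, Fintype.card_fin,
            nsmul_eq_mul, card_cast hm]
  have h2 : |∑ j, ∑ t ∈ Finset.univ.erase j, k (B j) (B t)| ≤ (m:ℝ) * (((m:ℝ) - 1) * K₀) := by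
    refine le_trans (Finset.abs_sum_le_sum_abs _ _) ?_
    calc ∑ j, |∑ t ∈ Finset.univ.erase j, k (B j) (B t)|
        ≤ Finset.univ.card • (((m:ℝ) - 1) * K₀) :=
          Finset.sum_le_card_nsmul _ _ _ (fun j _ => h1 j)
      _ = (m:ℝ) * (((m:ℝ) - 1) * K₀) := by
          rw [Finset.card_univ, Fintype.card_fin, nsmul_eq_mul]
  rw [fB, abs_mul, abs_of_nonneg (by positivity : (0:ℝ) ≤ 1 / ((m:ℝ) * ((m:ℝ) - 1)))]
  calc 1 / ((m:ℝ) * ((m:ℝ) - 1)) * |∑ j, ∑ t ∈ Finset.univ.erase j, k (B j) (B t)|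
      ≤ 1 / ((m:ℝ) * ((m:ℝ) - 1)) * ((m:ℝ) * (((m:ℝ) - 1) * K₀)) := by
        refine mul_le_mul_of_nonneg_left h2 (by positivity)
    _ = K₀ := by
        field_simp
  
lemma abs_gB (hm : 2 ≤ m) (hK : ∀ x y, |k x y| ≤ K₀) (B C : Fin m → Y) : |gB k m B C| ≤ K₀ := by
  have hK0 : 0 ≤ K₀ := le_trans (abs_nonneg _) (hK (B ⟨0, by omega⟩) (B ⟨0, by omega⟩))
  have hmpos : (0:ℝ) < (m:ℝ) := by
    have : 0 < m := by omega
    exact_mod_cast this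
  have h2 : |∑ j, ∑ t, k (B j) (C t)| ≤ (m:ℝ)^2 * K₀ := by
    refine le_trans (Finset.abs_sum_le_sum_abs _ _) ?_
    calc ∑ j, |∑ t, k (B j) (C t)|
        ≤ ∑ j : Fin m, (m:ℝ) * K₀ := by
          refine Finset.sum_le_sum fun j _ => ?_
          refine le_trans (Finset.abs_sum_le_sum_abs _ _) ?_
          calc ∑ t, |k (B j) (C t)| ≤ Finset.univ.card • K₀ :=
              Finset.sum_le_card_nsmul _ _ _ (fun t _ => hK _ _)
            _ = (m:ℝ) * K₀ := by rw [Finset.card_univ, Fintype.card_fin, nsmul_eq_mul]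
      _ = (m:ℝ)^2 * K₀ := by
          rw [Finset.sum_const, Finset.card_univ, Fintype.card_fin, nsmul_eq_mul]
          ring
  rw [gB, abs_mul, abs_of_nonneg (by positivity : (0:ℝ) ≤ 1 / (m:ℝ)^2)]
  calc 1 / (m:ℝ)^2 * |∑ j, ∑ t, k (B j) (C t)| ≤ 1 / (m:ℝ)^2 * ((m:ℝ)^2 * K₀) := by
        refine mul_le_mul_of_nonneg_left h2 (by positivity)
    _ = K₀ := by field_simp

section Means
variable (ν : Measure (ProbabilityMeasure Y)) [IsProbabilityMeasure ν]

def hJ (k : Y → Y → ℝ) (ν : Measure (ProbabilityMeasure Y)) : Y → ℝ :=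
  fun x => ∫ y, k x y ∂(pmJoin ν)

lemma meas_hJ (hk : Measurable fun p : Y × Y => k p.1 p.2) : Measurable (hJ k ν) := by
  have h := (hk.stronglyMeasurable.integral_prod_right' (ν := pmJoin ν)).measurable
  exact h

lemma abs_hJ (hK : ∀ x y, |k x y| ≤ K₀) : ∀ x, |hJ k ν x| ≤ K₀ :=
  fun x => abs_integral_le _ (fun y => hK x y)

lemma hJ_eq (hk : Measurable fun p : Y × Y => k p.1 p.2) (hK : ∀ x y, |k x y| ≤ K₀) (x : Y) :
    hJ k ν x = ∫ P, ∫ y, k x y ∂(P : Measure Y) ∂ν := by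
  rw [hJ, pmJoin]
  exact integral_bind' measurable_coe_pm (fun P => inferInstance)
    (meas_pair hk measurable_const measurable_id) (fun y => hK x y)

variable (hk : Measurable fun p : Y × Y => k p.1 p.2) (hm : 2 ≤ m)
  (hK : ∀ x y, |k x y| ≤ K₀)

include hk hm hK

lemma mean_fB : ∫ B, fB k m B ∂(mixM ν m)
    = ∫ P, kerInner k (P : Measure Y) (P : Measure Y) ∂ν := by
  have hm0 : (2:ℝ) ≤ (m:ℝ) := by exact_mod_cast hm
  rw [mixM, integral_bind' (measurable_pim m) (fun P => inferInstance) (meas_fB hk)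
    (abs_fB hm hK)]
  refine integral_congr_ae (Eventually.of_forall fun P => ?_)
  have hint : ∀ (j t : Fin m), Integrable (fun B : Fin m → Y => k (B j) (B t))
      (Measure.pi fun _ : Fin m => (P : Measure Y)) := fun j t =>
    integrable_of_bdd (meas_pair hk (measurable_pi_apply j) (measurable_pi_apply t))
      (fun B => hK _ _)
  calc ∫ B, fB k m B ∂(Measure.pi fun _ : Fin m => (P : Measure Y))
      = 1 / ((m:ℝ) * ((m:ℝ) - 1)) * ∫ B, (∑ j, ∑ t ∈ Finset.univ.erase j, k (B j) (B t))
          ∂(Measure.pi fun _ : Fin m => (P : Measure Y)) := by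
        simp only [fB]; rw [integral_const_mul]
    _ = 1 / ((m:ℝ) * ((m:ℝ) - 1)) * ∑ j, ∑ t ∈ Finset.univ.erase j,
          ∫ B, k (B j) (B t) ∂(Measure.pi fun _ : Fin m => (P : Measure Y)) := by
        rw [integral_finset_sum _ (fun j _ => integrable_finset_sum _ (fun t _ => hint j t))]
        congr 1
        exact Finset.sum_congr rfl fun j _ => integral_finset_sum _ (fun t _ => hint j t)
    _ = 1 / ((m:ℝ) * ((m:ℝ) - 1)) * ∑ j : Fin m, ∑ t ∈ Finset.univ.erase j,
          kerInner k (P : Measure Y) (P : Measure Y) := by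
        congr 1
        refine Finset.sum_congr rfl fun j _ => Finset.sum_congr rfl fun t ht => ?_
        have hjt : j ≠ t := fun h => (Finset.mem_erase.1 ht).1 h.symm
        exact integral_pi_pair (P : Measure Y) hjt hk hK
    _ = kerInner k (P : Measure Y) (P : Measure Y) := by
        have hconst : ∀ j : Fin m, ∑ t ∈ Finset.univ.erase j,
            kerInner k (P : Measure Y) (P : Measure Y)
            = ((m:ℝ) - 1) * kerInner k (P : Measure Y) (P : Measure Y) := fun j => by
          rw [Finset.sum_const, Finset.card_erase_of_mem (Finset.mem_univ j), Finset.card_univ,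
            Fintype.card_fin, nsmul_eq_mul, card_cast hm]
        rw [Finset.sum_congr rfl (fun j _ => hconst j), Finset.sum_const, Finset.card_univ,
          Fintype.card_fin, nsmul_eq_mul]
        have hmne : (m:ℝ) ≠ 0 := by linarith
        have hm1ne : (m:ℝ) - 1 ≠ 0 := by linarith
        field_simp

lemma int_gB (B : Fin m → Y) :
    ∫ C, gB k m B C ∂(mixM ν m) = (1/(m:ℝ)) * ∑ j, hJ k ν (B j) := by
  have hm0 : (2:ℝ) ≤ (m:ℝ) := by exact_mod_cast hm
  have hmeasC : Measurable fun C : Fin m → Y => gB k m B C :=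
    (Finset.measurable_sum _ fun j _ => Finset.measurable_sum _ fun t _ =>
      meas_pair hk measurable_const (measurable_pi_apply t)).const_mul _
  have hintC : ∀ (j t : Fin m) (P : ProbabilityMeasure Y),
      Integrable (fun C : Fin m → Y => k (B j) (C t))
        (Measure.pi fun _ : Fin m => (P : Measure Y)) := fun j t P =>
    integrable_of_bdd (meas_pair hk measurable_const (measurable_pi_apply t)) (fun C => hK _ _)
  rw [mixM, integral_bind' (measurable_pim m) (fun P => inferInstance) hmeasC (abs_gB hm hK B)]
  have hinner : ∀ P : ProbabilityMeasure Y,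
      ∫ C, gB k m B C ∂(Measure.pi fun _ : Fin m => (P : Measure Y))
      = (1/(m:ℝ)^2) * ∑ j : Fin m, ∑ _t : Fin m, ∫ y, k (B j) y ∂(P : Measure Y) := by
    intro P
    simp only [gB]
    rw [integral_const_mul]
    congr 1
    rw [integral_finset_sum _ (fun j _ => integrable_finset_sum _ (fun t _ => hintC j t P))]
    refine Finset.sum_congr rfl fun j _ => ?_
    rw [integral_finset_sum _ (fun t _ => hintC j t P)]
    refine Finset.sum_congr rfl fun t _ => ?_
    exact integral_pi_single (P : Measure Y) t (meas_pair hk measurable_const measurable_id)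
      (fun y => hK _ _)
  rw [integral_congr_ae (Eventually.of_forall hinner)]
  have hPint : ∀ j : Fin m, Integrable (fun P : ProbabilityMeasure Y =>
      ∫ y, k (B j) y ∂(P : Measure Y)) ν :=
    fun j => integrable_of_bdd
      (measurable_integral_kernel measurable_coe_pm (fun P => inferInstance)
        (meas_pair hk measurable_const measurable_id) (fun y => hK _ _))
      (fun P => abs_integral_le _ (fun y => hK _ _))
  rw [integral_const_mul, integral_finset_sum _ (fun j _ =>
    integrable_finset_sum _ (fun t _ => hPint j))]
  have hstep : ∀ j : Fin m, ∑ _t : Fin m, ∫ P, (∫ y, k (B j) y ∂(P : Measure Y)) ∂ν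
      = (m:ℝ) * hJ k ν (B j) := by
    intro j
    rw [hJ_eq ν hk hK (B j), Finset.sum_const, Finset.card_univ, Fintype.card_fin,
      nsmul_eq_mul]
  have hswap : ∀ j : Fin m, ∫ P, (∑ _t : Fin m, ∫ y, k (B j) y ∂(P : Measure Y)) ∂ν
      = ∑ _t : Fin m, ∫ P, (∫ y, k (B j) y ∂(P : Measure Y)) ∂ν :=
    fun j => integral_finset_sum _ (fun t _ => hPint j)
  rw [Finset.sum_congr rfl (fun j _ => (hswap j).trans (hstep j)), Finset.mul_sum,
    Finset.mul_sum]
  refine Finset.sum_congr rfl fun j _ => ?_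
  have hmne : (m:ℝ) ≠ 0 := by linarith
  field_simp

lemma mean_gB : ∫ B, (∫ C, gB k m B C ∂(mixM ν m)) ∂(mixM ν m)
    = kerInner k (pmJoin ν) (pmJoin ν) := by
  have hm0 : (2:ℝ) ≤ (m:ℝ) := by exact_mod_cast hm
  have hmne : (m:ℝ) ≠ 0 := by linarith
  have h1 : (fun B : Fin m → Y => ∫ C, gB k m B C ∂(mixM ν m))
      = fun B => (1/(m:ℝ)) * ∑ j, hJ k ν (B j) := funext (int_gB ν hk hm hK)
  rw [h1, integral_const_mul, integral_finset_sum _ (fun j _ =>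
    integrable_of_bdd (f := fun B : Fin m → Y => hJ k ν (B j))
      ((meas_hJ ν hk).comp (measurable_pi_apply j)) (fun B => abs_hJ ν hK (B j)))]
  have h2 : ∀ j : Fin m, ∫ B, hJ k ν (B j) ∂(mixM ν m) = ∫ x, hJ k ν x ∂(pmJoin ν) := by
    intro j
    rw [mixM, integral_bind' (f := fun B : Fin m → Y => hJ k ν (B j)) (measurable_pim m)
      (fun P => inferInstance) ((meas_hJ ν hk).comp (measurable_pi_apply j))
      (fun B => abs_hJ ν hK (B j))]
    have h3 : ∀ P : ProbabilityMeasure Y,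
        ∫ B, hJ k ν (B j) ∂(Measure.pi fun _ : Fin m => (P : Measure Y))
        = ∫ x, hJ k ν x ∂(P : Measure Y) :=
      fun P => integral_pi_single (P : Measure Y) j (meas_hJ ν hk) (abs_hJ ν hK)
    rw [integral_congr_ae (Eventually.of_forall h3), pmJoin]
    exact (integral_bind' measurable_coe_pm (fun P => inferInstance) (meas_hJ ν hk)
      (abs_hJ ν hK)).symm
  rw [Finset.sum_congr rfl (fun j _ => h2 j), Finset.sum_const, Finset.card_univ,
    Fintype.card_fin, nsmul_eq_mul]
  have h4 : ∫ x, hJ k ν x ∂(pmJoin ν) = kerInner k (pmJoin ν) (pmJoin ν) := rfl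
  rw [h4]
  field_simp

lemma abs_intgB (B : Fin m → Y) : |∫ C, gB k m B C ∂(mixM ν m)| ≤ K₀ := by
  have hK0 : 0 ≤ K₀ := le_trans (abs_nonneg _) (hK (B ⟨0, by omega⟩) (B ⟨0, by omega⟩))
  have hm0 : (2:ℝ) ≤ (m:ℝ) := by exact_mod_cast hm
  rw [int_gB ν hk hm hK B, abs_mul, abs_of_nonneg (by positivity : (0:ℝ) ≤ 1/(m:ℝ))]
  have h1 : |∑ j, hJ k ν (B j)| ≤ (m:ℝ) * K₀ := by
    refine le_trans (Finset.abs_sum_le_sum_abs _ _) ?_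
    calc ∑ j : Fin m, |hJ k ν (B j)| ≤ Finset.univ.card • K₀ :=
        Finset.sum_le_card_nsmul _ _ _ (fun j _ => abs_hJ ν hK (B j))
      _ = (m:ℝ) * K₀ := by rw [Finset.card_univ, Fintype.card_fin, nsmul_eq_mul]
  calc 1/(m:ℝ) * |∑ j, hJ k ν (B j)| ≤ 1/(m:ℝ) * ((m:ℝ) * K₀) :=
      mul_le_mul_of_nonneg_left h1 (by positivity)
    _ = K₀ := by field_simp

lemma meas_intgB : Measurable fun B : Fin m → Y => ∫ C, gB k m B C ∂(mixM ν m) := by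
  have h1 : (fun B : Fin m → Y => ∫ C, gB k m B C ∂(mixM ν m))
      = fun B => (1/(m:ℝ)) * ∑ j, hJ k ν (B j) := funext (int_gB ν hk hm hK)
  rw [h1]
  exact (Finset.measurable_sum _ fun j _ =>
    (meas_hJ ν hk).comp (measurable_pi_apply j)).const_mul _

lemma mean_H : ∫ B, ∫ C, (fB k m B - gB k m B C) ∂(mixM ν m) ∂(mixM ν m)
    = (∫ P, kerInner k (P : Measure Y) (P : Measure Y) ∂ν)
      - kerInner k (pmJoin ν) (pmJoin ν) := by
  have hmeasC : ∀ B : Fin m → Y, Measurable fun C : Fin m → Y => gB k m B C := fun B =>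
    (Finset.measurable_sum _ fun j _ => Finset.measurable_sum _ fun t _ =>
      meas_pair hk measurable_const (measurable_pi_apply t)).const_mul _
  have h1 : ∀ B : Fin m → Y, ∫ C, (fB k m B - gB k m B C) ∂(mixM ν m)
      = fB k m B - ∫ C, gB k m B C ∂(mixM ν m) := fun B => by
    rw [integral_sub (integrable_const _)
      (integrable_of_bdd (hmeasC B) (fun C => abs_gB hm hK B C)), integral_const, probReal_univ]
    simp
  rw [integral_congr_ae (Eventually.of_forall h1),
    integral_sub (integrable_of_bdd (meas_fB hk) (abs_fB hm hK))
      (integrable_of_bdd (meas_intgB ν hk hm hK) (abs_intgB ν hk hm hK)),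
    mean_fB ν hk hm hK, mean_gB ν hk hm hK]

lemma mean_H_centered :
    ∫ B, ∫ C, ((fB k m B - gB k m B C)
        - ∫ B', ∫ C', (fB k m B' - gB k m B' C') ∂(mixM ν m) ∂(mixM ν m))
      ∂(mixM ν m) ∂(mixM ν m) = 0 := by
  set θ := ∫ B', ∫ C', (fB k m B' - gB k m B' C') ∂(mixM ν m) ∂(mixM ν m) with hθ
  have hmeasC : ∀ B : Fin m → Y, Measurable fun C : Fin m → Y => gB k m B C := fun B =>
    (Finset.measurable_sum _ fun j _ => Finset.measurable_sum _ fun t _ =>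
      meas_pair hk measurable_const (measurable_pi_apply t)).const_mul _
  have hintH : ∀ B : Fin m → Y, Integrable (fun C => fB k m B - gB k m B C) (mixM ν m) :=
    fun B => (integrable_const _).sub (integrable_of_bdd (hmeasC B) (abs_gB hm hK B))
  have h1 : ∀ B : Fin m → Y, ∫ C, ((fB k m B - gB k m B C) - θ) ∂(mixM ν m)
      = (∫ C, (fB k m B - gB k m B C) ∂(mixM ν m)) - θ := fun B => by
    rw [integral_sub (hintH B) (integrable_const _), integral_const, probReal_univ]
    simp
  rw [integral_congr_ae (Eventually.of_forall h1)]
  have h2 : ∀ B : Fin m → Y, ∫ C, (fB k m B - gB k m B C) ∂(mixM ν m)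
      = fB k m B - ∫ C, gB k m B C ∂(mixM ν m) := fun B => by
    rw [integral_sub (integrable_const _) (integrable_of_bdd (hmeasC B) (abs_gB hm hK B)),
      integral_const, probReal_univ]
    simp
  have hq : Integrable (fun B => ∫ C, (fB k m B - gB k m B C) ∂(mixM ν m)) (mixM ν m) := by
    rw [funext h2]
    exact (integrable_of_bdd (meas_fB hk) (abs_fB hm hK)).sub
      (integrable_of_bdd (meas_intgB ν hk hm hK) (abs_intgB ν hk hm hK))
  rw [integral_sub hq (integrable_const _), integral_const, probReal_univ]
  simp [hθ]

end Means

lemma varEst_eq (hm : 2 ≤ m) {n : ℕ} (hn : 2 ≤ n) (X : Fin n → Fin m → Y) (θ : ℝ) :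
    varEst k n m X - θ
      = (1/((n:ℝ)*((n:ℝ)-1))) * ∑ i, ∑ s ∈ Finset.univ.erase i,
          ((fB k m (X i) - gB k m (X i) (X s)) - θ) := by
  have hm0 : (2:ℝ) ≤ (m:ℝ) := by exact_mod_cast hm
  have hn0 : (2:ℝ) ≤ (n:ℝ) := by exact_mod_cast hn
  have hmne : (m:ℝ) ≠ 0 := by linarith
  have hm1ne : (m:ℝ) - 1 ≠ 0 := by linarith
  have hnne : (n:ℝ) ≠ 0 := by linarith
  have hn1ne : (n:ℝ) - 1 ≠ 0 := by linarith
  have hfB : ∀ B : Fin m → Y, ∑ j, ∑ t ∈ Finset.univ.erase j, k (B j) (B t)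
      = ((m:ℝ)*((m:ℝ)-1)) * fB k m B := by
    intro B
    rw [fB]
    field_simp
  have hgB : ∀ B C : Fin m → Y, ∑ j, ∑ t, k (B j) (C t) = (m:ℝ)^2 * gB k m B C := by
    intro B C
    rw [gB]
    field_simp
  have h1 : ∑ i, ∑ j, ∑ t ∈ Finset.univ.erase j, k (X i j) (X i t)
      = ((m:ℝ)*((m:ℝ)-1)) * ∑ i, fB k m (X i) := by
    rw [Finset.mul_sum]
    exact Finset.sum_congr rfl fun i _ => hfB (X i)
  have h2 : ∑ i, ∑ s ∈ Finset.univ.erase i, ∑ j, ∑ t, k (X i j) (X s t)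
      = (m:ℝ)^2 * ∑ i, ∑ s ∈ Finset.univ.erase i, gB k m (X i) (X s) := by
    rw [Finset.mul_sum]
    refine Finset.sum_congr rfl fun i _ => ?_
    rw [Finset.mul_sum]
    exact Finset.sum_congr rfl fun s _ => hgB _ _
  have h3 : ∑ i, ∑ s ∈ Finset.univ.erase i, ((fB k m (X i) - gB k m (X i) (X s)) - θ)
      = ((n:ℝ)-1) * (∑ i, fB k m (X i))
        - (∑ i, ∑ s ∈ Finset.univ.erase i, gB k m (X i) (X s)) - (n:ℝ)*((n:ℝ)-1)*θ := by
    have per : ∀ i : Fin n, ∑ s ∈ Finset.univ.erase i, ((fB k m (X i) - gB k m (X i) (X s)) - θ)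
        = ((n:ℝ)-1) * fB k m (X i) - (∑ s ∈ Finset.univ.erase i, gB k m (X i) (X s))
          - ((n:ℝ)-1)*θ := by
      intro i
      rw [Finset.sum_sub_distrib, Finset.sum_sub_distrib, Finset.sum_const, Finset.sum_const,
        Finset.card_erase_of_mem (Finset.mem_univ i), Finset.card_univ, Fintype.card_fin,
        nsmul_eq_mul, nsmul_eq_mul, card_cast hn]
    rw [Finset.sum_congr rfl (fun i _ => per i), Finset.sum_sub_distrib, Finset.sum_sub_distrib,
      ← Finset.mul_sum, Finset.sum_const, Finset.card_univ, Fintype.card_fin, nsmul_eq_mul]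
    ring
  rw [varEst, h1, h2, h3]
  field_simp

end VarEstMain

/-- Weak consistency of the distributional variance estimator in the number of outer
samples: for fixed `m ≥ 2` and every `ε > 0`,
`μ_{n,m}(|V̂ar_k^{(n,m)} − Var_k(ν)| ≥ ε) → 0` as `n → ∞`. -/
theorem varEst_weakly_consistent
    {Y : Type*} [MeasurableSpace Y]
    (k : Y → Y → ℝ)
    (hk_meas : Measurable fun p : Y × Y => k p.1 p.2)
    (hk_symm : ∀ x y, k x y = k y x)
    (hk_bdd : ∃ K, ∀ x y, |k x y| ≤ K)
    (hk_psd : ∀ (N : ℕ) (x : Fin N → Y) (a : Fin N → ℝ),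
      0 ≤ ∑ i, ∑ j, a i * k (x i) (x j) * a j)
    (ν : Measure (ProbabilityMeasure Y)) [IsProbabilityMeasure ν]
    (m : ℕ) (hm : 2 ≤ m) :
    ∀ ε : ℝ, 0 < ε →
      Filter.Tendsto
        (fun n : ℕ =>
          twoStage ν n m
            {X | ε ≤ |varEst k n m X
              - ((∫ P, kerInner k (P : Measure Y) (P : Measure Y) ∂ν)
                  - kerInner k (pmJoin ν) (pmJoin ν))|})
        Filter.atTop (nhds 0) := by
  classical
  intro ε hε
  open VarEstMain VarEstAux in
  obtain ⟨K₁, hK₁⟩ := hk_bdd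
  set K₀ : ℝ := max K₁ 0 with hK₀def
  have hK : ∀ x y, |k x y| ≤ K₀ := fun x y => le_trans (hK₁ x y) (le_max_left _ _)
  have hK0 : 0 ≤ K₀ := le_max_right _ _
  set V : ℝ := (∫ P, kerInner k (P : Measure Y) (P : Measure Y) ∂ν)
    - kerInner k (pmJoin ν) (pmJoin ν) with hVdef
  set μ1 := VarEstMain.mixM ν m with hμ1def
  set θ : ℝ := ∫ B, ∫ C, (VarEstMain.fB k m B - VarEstMain.gB k m B C) ∂μ1 ∂μ1 with hθdef
  have hθV : θ = V := VarEstMain.mean_H ν hk_meas hm hK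
  -- the centered two-sample kernel
  set G : (Fin m → Y) → (Fin m → Y) → ℝ :=
    fun B C => (VarEstMain.fB k m B - VarEstMain.gB k m B C) - θ with hGdef
  have hGmeas : Measurable fun p : (Fin m → Y) × (Fin m → Y) => G p.1 p.2 := by
    rw [hGdef]
    exact (((VarEstMain.meas_fB hk_meas).comp measurable_fst).sub
      (VarEstMain.meas_gB hk_meas)).sub measurable_const
  have hHbd : ∀ B C : Fin m → Y, |VarEstMain.fB k m B - VarEstMain.gB k m B C| ≤ 2 * K₀ :=
    fun B C => le_trans (abs_sub _ _)
      (by have := VarEstMain.abs_fB hm hK B; have := VarEstMain.abs_gB hm hK B C; linarith)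
  have hθabs : |θ| ≤ 2 * K₀ := by
    rw [hθdef]
    exact VarEstAux.abs_integral_le _ (fun B => VarEstAux.abs_integral_le _ (fun C => hHbd B C))
  have hGbd : ∀ B C : Fin m → Y, |G B C| ≤ 4 * K₀ := fun B C =>
    le_trans (abs_sub _ _) (by have := hHbd B C; linarith)
  have hGmean : ∫ B, ∫ C, G B C ∂μ1 ∂μ1 = 0 :=
    VarEstMain.mean_H_centered ν hk_meas hm hK
  -- key quantitative bound for n ≥ 2
  have key : ∀ n : ℕ, 2 ≤ n →
      (twoStage ν n m) {X | ε ≤ |varEst k n m X - V|}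
        ≤ ENNReal.ofReal ((16 * (4 * K₀)^2 / ε^2) / n) := by
    intro n hn
    have hn0 : (2:ℝ) ≤ (n:ℝ) := by exact_mod_cast hn
    have hnne : (n:ℝ) ≠ 0 := by linarith
    rw [VarEstMain.twoStage_eq_pi ν n m]
    set c : ℝ := 1/((n:ℝ)*((n:ℝ)-1)) with hcdef
    set W : (Fin n → Fin m → Y) → ℝ :=
      fun X => c * ∑ i, ∑ s ∈ Finset.univ.erase i, G (X i) (X s) with hWdef
    have hWrw : ∀ X, varEst k n m X - V = W X := fun X => by
      rw [← hθV]
      exact VarEstMain.varEst_eq hm hn X θ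
    have hWmeas : Measurable W := by
      rw [hWdef]
      exact (Finset.measurable_sum _ fun i _ => Finset.measurable_sum _ fun s _ =>
        VarEstAux.meas_pair hGmeas (measurable_pi_apply i) (measurable_pi_apply s)).const_mul _
    have hnn1pos : (0:ℝ) < (n:ℝ)*((n:ℝ)-1) := by nlinarith
    have hc0 : 0 ≤ c := le_of_lt (by rw [hcdef]; positivity)
    -- bound on W
    have hSbd : ∀ X : Fin n → Fin m → Y,
        |∑ i, ∑ s ∈ Finset.univ.erase i, G (X i) (X s)| ≤ (n:ℝ) * ((n:ℝ) * (4*K₀)) := by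
      intro X
      refine le_trans (Finset.abs_sum_le_sum_abs _ _) ?_
      have hrow : ∀ i : Fin n, |∑ s ∈ Finset.univ.erase i, G (X i) (X s)| ≤ (n:ℝ) * (4*K₀) := by
        intro i
        refine le_trans (Finset.abs_sum_le_sum_abs _ _) ?_
        calc ∑ s ∈ Finset.univ.erase i, |G (X i) (X s)|
            ≤ (Finset.univ.erase i).card • (4*K₀) :=
              Finset.sum_le_card_nsmul _ _ _ (fun s _ => hGbd _ _)
          _ = ((Finset.univ.erase i).card : ℝ) * (4*K₀) := nsmul_eq_mul _ _
          _ ≤ (n:ℝ) * (4*K₀) := by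
              refine mul_le_mul_of_nonneg_right ?_ (by linarith)
              have h1 : (Finset.univ.erase i).card ≤ n := le_trans (Finset.card_le_card
                (Finset.erase_subset _ _)) (by simp)
              exact_mod_cast h1
      calc ∑ i, |∑ s ∈ Finset.univ.erase i, G (X i) (X s)|
          ≤ Finset.univ.card • ((n:ℝ) * (4*K₀)) :=
            Finset.sum_le_card_nsmul _ _ _ (fun i _ => hrow i)
        _ = (n:ℝ) * ((n:ℝ) * (4*K₀)) := by
            rw [Finset.card_univ, Fintype.card_fin, nsmul_eq_mul]
    have hWbd : ∀ X, |W X| ≤ c * ((n:ℝ) * ((n:ℝ) * (4*K₀))) := fun X => by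
      rw [hWdef, abs_mul, abs_of_nonneg hc0]
      exact mul_le_mul_of_nonneg_left (hSbd X) hc0
    -- second moment bound
    have hsq : ∫ X, (W X)^2 ∂(Measure.pi fun _ : Fin n => μ1)
        ≤ (16 * (4*K₀)^2) / n := by
      have h1 : ∀ X, (W X)^2
          = c^2 * (∑ i, ∑ s ∈ Finset.univ.erase i, G (X i) (X s))^2 := fun X => by
        rw [hWdef, mul_pow]
      simp_rw [h1]
      rw [integral_const_mul]
      have h2 := VarEstAux.ustat_sq_bound μ1 hGmeas hGbd hGmean n
      have h3 : c^2 * ∫ X, (∑ i, ∑ s ∈ Finset.univ.erase i, G (X i) (X s))^2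
          ∂(Measure.pi fun _ : Fin n => μ1) ≤ c^2 * (4 * (4*K₀)^2 * n^3) :=
        mul_le_mul_of_nonneg_left h2 (sq_nonneg c)
      refine le_trans h3 ?_
      have hc_le : c ≤ 2/(n:ℝ)^2 := by
        rw [hcdef, div_le_div_iff₀ hnn1pos (by positivity)]
        nlinarith
      have hc2 : c^2 ≤ (2/(n:ℝ)^2)^2 := pow_le_pow_left₀ hc0 hc_le 2
      have h4 : c^2 * (4 * (4*K₀)^2 * n^3) ≤ (2/(n:ℝ)^2)^2 * (4 * (4*K₀)^2 * n^3) :=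
        mul_le_mul_of_nonneg_right hc2 (by positivity)
      refine le_trans h4 (le_of_eq ?_)
      field_simp
      ring
    -- Markov inequality
    have hWint : Integrable (fun X => (W X)^2) (Measure.pi fun _ : Fin n => μ1) := by
      refine VarEstAux.integrable_of_bdd (hWmeas.pow_const 2)
        (C := (c * ((n:ℝ) * ((n:ℝ) * (4*K₀))))^2) (fun X => ?_)
      rw [abs_of_nonneg (sq_nonneg _), ← sq_abs]
      exact pow_le_pow_left₀ (abs_nonneg _) (hWbd X) 2
    have hmark := mul_meas_ge_le_integral_of_nonneg (μ := Measure.pi fun _ : Fin n => μ1)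
      (f := fun X => (W X)^2)
      (Eventually.of_forall fun X => by simp only [Pi.zero_apply]; positivity) hWint (ε^2)
    have hsubset : {X : Fin n → Fin m → Y | ε ≤ |varEst k n m X - V|}
        ⊆ {X | ε^2 ≤ (W X)^2} := by
      intro X hX
      simp only [mem_setOf_eq] at hX ⊢
      rw [hWrw X] at hX
      calc ε^2 = ε * ε := sq ε
        _ ≤ |W X| * |W X| := mul_le_mul hX hX hε.le (abs_nonneg _)
        _ = (W X)^2 := by rw [abs_mul_abs_self, sq]
    refine le_trans (measure_mono hsubset) ?_
    have hfin : (Measure.pi fun _ : Fin n => μ1) {X | ε^2 ≤ (W X)^2} ≠ ⊤ :=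
      measure_ne_top _ _
    have hε2 : (0:ℝ) < ε^2 := by positivity
    have h5 : ε^2 * ((Measure.pi fun _ : Fin n => μ1) {X | ε^2 ≤ (W X)^2}).toReal
        ≤ 16*(4*K₀)^2/n := le_trans hmark hsq
    have h6 : ((Measure.pi fun _ : Fin n => μ1) {X | ε^2 ≤ (W X)^2}).toReal
        ≤ (16*(4*K₀)^2/ε^2)/n := by
      rw [div_right_comm, le_div_iff₀ hε2]
      linarith
    calc (Measure.pi fun _ : Fin n => μ1) {X | ε^2 ≤ (W X)^2}
        = ENNReal.ofReal (((Measure.pi fun _ : Fin n => μ1) {X | ε^2 ≤ (W X)^2}).toReal) :=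
          (ENNReal.ofReal_toReal hfin).symm
      _ ≤ ENNReal.ofReal ((16 * (4 * K₀)^2 / ε^2) / n) := ENNReal.ofReal_le_ofReal h6
  have hlim : Tendsto (fun n : ℕ => ENNReal.ofReal ((16 * (4*K₀)^2 / ε^2) / n))
      atTop (nhds 0) := by
    have h1 := tendsto_const_div_atTop_nhds_zero_nat (16 * (4*K₀)^2 / ε^2)
    have h2 := ENNReal.tendsto_ofReal h1
    simpa using h2
  refine tendsto_of_tendsto_of_tendsto_of_le_of_le' tendsto_const_nhds hlim
    (Eventually.of_forall fun n => zero_le) ?_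
  exact eventually_atTop.2 ⟨2, fun n hn => key n hn⟩
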